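/- Let E be a vector space over a field K decomposed as a direct sum G = E_{n_1} ⊕ ... ⊕ E_{n_m} of subspaces of an n-dimensional space E (with E_1 ⊂ ... ⊂ E_n a flag, dim E_j = j), let L ⊆ E⊗E be a subspace, and let L_G = ⊕_{1≤j,k≤m} (E_{n_j} ⊗ E_{n_k}) ∩ L inside G⊗G. Then for every q ≥ 2, dim E_q(L_G, G) ≤ m^q · dim E_q(L, E), where E_q(L, E) = ∩_{j=1}^{q-1} E^{⊗(j-1)} ⊗ L ⊗ E^{⊗(q-1-j)}. -/

import Mathlib

open TensorProduct

namespace GS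

variable (K : Type*) [Field K] (V : Type*) [AddCommGroup V] [Module K V]

/-- The tensor product of two subspaces, as a subspace of the tensor product. -/
noncomputable def tsub {M N : Type*} [AddCommGroup M] [Module K M] [AddCommGroup N] [Module K N]
    (A : Submodule K M) (B : Submodule K N) : Submodule K (M ⊗[K] N) :=
  LinearMap.range (TensorProduct.map A.subtype B.subtype)

/-- `V ≃ V^{⊗1}`. -/
noncomputable def pow1 : V ≃ₗ[K] ⨂[K]^1 V :=
  (PiTensorProduct.subsingletonEquiv (s := fun _ : Fin 1 => V) (0 : Fin 1)).symm

/-- `V ⊗ V ≃ V^{⊗2}`. -/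
noncomputable def pow2 : (V ⊗[K] V) ≃ₗ[K] ⨂[K]^2 V :=
  (TensorProduct.congr (pow1 K V) (pow1 K V)).trans
    ((TensorPower.mulEquiv (n := 1) (m := 1)).trans (TensorPower.cast K V (by norm_num)))

/-- The subspace `V^{⊗a} ⊗ L ⊗ V^{⊗b}` of `V^{⊗(a+(2+b))}`. -/
noncomputable def segAux (a b : ℕ) (L : Submodule K (V ⊗[K] V)) :
    Submodule K (⨂[K]^(a + (2 + b)) V) :=
  Submodule.map (TensorPower.mulEquiv (R := K) (M := V) (n := a) (m := 2 + b)).toLinearMap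
    (tsub K (⊤ : Submodule K (⨂[K]^a V))
      (Submodule.map (TensorPower.mulEquiv (R := K) (M := V) (n := 2) (m := b)).toLinearMap
        (tsub K (L.map (pow2 K V : (V ⊗[K] V) →ₗ[K] ⨂[K]^2 V)) (⊤ : Submodule K (⨂[K]^b V)))))

/-- For `j : Fin (q-1)`, the subspace `V^{⊗j} ⊗ L ⊗ V^{⊗(q-2-j)}` of `V^{⊗q}`
(the `(j+1)`-st shift of `L`). -/
noncomputable def shiftSub (q : ℕ) (L : Submodule K (V ⊗[K] V)) (j : Fin (q - 1)) :
    Submodule K (⨂[K]^q V) :=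
  Submodule.map (TensorPower.cast K V (by have := j.2; omega : (j : ℕ) + (2 + (q - 2 - j)) = q)).toLinearMap
    (segAux K V j (q - 2 - j) L)

/-- `E_q(L,V) = ⋂_{j=1}^{q-1} V^{⊗(j-1)} ⊗ L ⊗ V^{⊗(q-1-j)} ⊆ V^{⊗q}`. -/
noncomputable def Eint (q : ℕ) (L : Submodule K (V ⊗[K] V)) : Submodule K (⨂[K]^q V) :=
  ⨅ j : Fin (q - 1), shiftSub K V q L j

/-- The degree-`q` component of the two-sided ideal generated by the subspace
`M ⊆ V ⊗ V` of quadratic relations: the sum of all shifts `V^{⊗(j-1)} ⊗ M ⊗ V^{⊗(q-1-j)}`. -/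
noncomputable def idealComp (q : ℕ) (M : Submodule K (V ⊗[K] V)) : Submodule K (⨂[K]^q V) :=
  ⨆ j : Fin (q - 1), shiftSub K V q M j

/-- The dimension of the degree-`q` component of the quadratic algebra with space of
relations `M ⊆ V ⊗ V` (the quotient of `V^{⊗q}` by the degree-`q` component of the ideal). -/
noncomputable def quadDim (q : ℕ) (M : Submodule K (V ⊗[K] V)) : ℕ :=
  Module.finrank K ((⨂[K]^q V) ⧸ idealComp K V q M)

/-- `h_q(K,n,d)`: the minimal dimension of the `q`-th graded component over all quadratic
`K`-algebras with `n` generators and `d` (linearly independent) quadratic relations. -/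
noncomputable def hq (n d q : ℕ) : ℕ :=
  sInf { h | ∃ M : Submodule K ((Fin n → K) ⊗[K] (Fin n → K)),
      Module.finrank K M = d ∧ quadDim K (Fin n → K) q M = h }

end GS


open TensorProduct PiTensorProduct

namespace GSAux

variable {K : Type*} [Field K] {P E : Type*} [AddCommGroup P] [Module K P]
  [AddCommGroup E] [Module K E]

/-- Naturality of `TensorPower.cast`. -/
theorem map_cast (a b : ℕ) (g : Fin b → (P →ₗ[K] E)) (h : a = b) :
    (PiTensorProduct.map g) ∘ₗ (TensorPower.cast K P h).toLinearMap
      = (TensorPower.cast K E h).toLinearMap ∘ₗ PiTensorProduct.map (fun i => g (Fin.cast h i)) := by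
  subst h
  simp [TensorPower.cast_refl]

/-- Naturality of `TensorPower.mulEquiv`. -/
theorem map_mulEquiv (a b : ℕ) (g : Fin (a + b) → (P →ₗ[K] E)) :
    (PiTensorProduct.map g) ∘ₗ
        (TensorPower.mulEquiv (R := K) (M := P) (n := a) (m := b)).toLinearMap
      = (TensorPower.mulEquiv).toLinearMap ∘ₗ
        TensorProduct.map (PiTensorProduct.map (fun i => g (Fin.castAdd b i)))
          (PiTensorProduct.map (fun i => g (Fin.natAdd a i))) := by
  ext x y
  simp only [LinearMap.compMultilinearMap_apply, LinearMap.coe_comp, Function.comp_apply,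
    LinearEquiv.coe_coe, TensorProduct.AlgebraTensorModule.curry_apply, TensorProduct.curry_apply,
    LinearMap.coe_restrictScalars, PiTensorProduct.map_tprod, TensorProduct.map_tmul,
    TensorPower.mulEquiv, LinearEquiv.trans_apply, tmulEquiv_apply, reindex_tprod]
  congr 1
  funext i
  obtain ⟨s, rfl⟩ := finSumFinEquiv.surjective i
  cases s with
  | inl j => simp
  | inr j => simp

theorem pow1_apply (v : P) : GS.pow1 K P v = tprod K (fun _ : Fin 1 => v) := by
  rw [GS.pow1, LinearEquiv.symm_apply_eq, subsingletonEquiv_apply_tprod]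

/-- Naturality of `pow1`. -/
theorem map_pow1 (h : P →ₗ[K] E) :
    PiTensorProduct.map (fun _ : Fin 1 => h) ∘ₗ (GS.pow1 K P).toLinearMap
      = (GS.pow1 K E).toLinearMap ∘ₗ h := by
  ext v
  simp [pow1_apply]

/-- Naturality of `pow2`. -/
theorem map_pow2 (g : Fin 2 → (P →ₗ[K] E)) :
    PiTensorProduct.map g ∘ₗ (GS.pow2 K P).toLinearMap
      = (GS.pow2 K E).toLinearMap ∘ₗ TensorProduct.map (g 0) (g 1) := by
  ext x y
  simp only [TensorProduct.AlgebraTensorModule.curry_apply, TensorProduct.curry_apply,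
    LinearMap.coe_restrictScalars, LinearMap.coe_comp, Function.comp_apply, LinearEquiv.coe_coe,
    TensorProduct.map_tmul, GS.pow2, LinearEquiv.trans_apply, TensorProduct.congr_tmul,
    pow1_apply, TensorPower.mulEquiv, tmulEquiv_apply, reindex_tprod, TensorPower.cast_tprod,
    PiTensorProduct.map_tprod]
  congr 1
  funext i
  fin_cases i <;> simp [finSumFinEquiv] <;> rfl

section Aux2

variable {K : Type*} [Field K]

theorem tsub_le_tsub {M N : Type*} [AddCommGroup M] [Module K M] [AddCommGroup N] [Module K N]
    {A A' : Submodule K M} {B B' : Submodule K N} (hA : A ≤ A') (hB : B ≤ B') :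
    GS.tsub K A B ≤ GS.tsub K A' B' := by
  have h1 : A.subtype = A'.subtype ∘ₗ Submodule.inclusion hA := by ext x; rfl
  have h2 : B.subtype = B'.subtype ∘ₗ Submodule.inclusion hB := by ext x; rfl
  rw [GS.tsub, GS.tsub, h1, h2, TensorProduct.map_comp]
  exact LinearMap.range_comp_le_range _ _

theorem map_tsub_le {M N M' N' : Type*} [AddCommGroup M] [Module K M] [AddCommGroup N] [Module K N]
    [AddCommGroup M'] [Module K M'] [AddCommGroup N'] [Module K N']
    (A : M →ₗ[K] M') (B : N →ₗ[K] N') (S₁ : Submodule K M) (S₂ : Submodule K N) :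
    Submodule.map (TensorProduct.map A B) (GS.tsub K S₁ S₂)
      ≤ GS.tsub K (S₁.map A) (S₂.map B) := by
  rw [GS.tsub, GS.tsub, ← LinearMap.range_comp, ← TensorProduct.map_comp]
  have h1 : A ∘ₗ S₁.subtype
      = (S₁.map A).subtype ∘ₗ A.restrict (fun x hx => Submodule.mem_map_of_mem hx) := by
    ext x; rfl
  have h2 : B ∘ₗ S₂.subtype
      = (S₂.map B).subtype ∘ₗ B.restrict (fun x hx => Submodule.mem_map_of_mem hx) := by
    ext x; rfl
  rw [h1, h2, TensorProduct.map_comp]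
  exact LinearMap.range_comp_le_range _ _

variable {P E : Type*} [AddCommGroup P] [Module K P] [AddCommGroup E] [Module K E]

theorem map_segAux_le (a b : ℕ) (g : Fin (a + (2 + b)) → (P →ₗ[K] E))
    {M : Submodule K (P ⊗[K] P)} {L : Submodule K (E ⊗[K] E)}
    (hML : ∀ s t, Submodule.map (TensorProduct.map (g s) (g t)) M ≤ L) :
    Submodule.map (PiTensorProduct.map g) (GS.segAux K P a b M) ≤ GS.segAux K E a b L := by
  rw [GS.segAux, GS.segAux]
  set gr : Fin (2 + b) → (P →ₗ[K] E) := fun i => g (Fin.natAdd a i) with hgr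
  set gl : Fin a → (P →ₗ[K] E) := fun i => g (Fin.castAdd (2 + b) i) with hgl
  -- outer mulEquiv step
  rw [← Submodule.map_comp, map_mulEquiv a (2 + b) g, Submodule.map_comp]
  refine Submodule.map_mono ?_
  refine le_trans (map_tsub_le _ _ _ _) ?_
  refine tsub_le_tsub le_top ?_
  -- inner mulEquiv step
  rw [← Submodule.map_comp, map_mulEquiv 2 b gr, Submodule.map_comp]
  refine Submodule.map_mono ?_
  refine le_trans (map_tsub_le _ _ _ _) ?_
  refine tsub_le_tsub ?_ le_top
  -- pow2 step
  rw [← Submodule.map_comp, map_pow2 (fun i => gr (Fin.castAdd b i)), Submodule.map_comp]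
  exact Submodule.map_mono (hML _ _)

theorem map_shiftSub_le (q : ℕ) (g : Fin q → (P →ₗ[K] E))
    {M : Submodule K (P ⊗[K] P)} {L : Submodule K (E ⊗[K] E)}
    (hML : ∀ s t, Submodule.map (TensorProduct.map (g s) (g t)) M ≤ L) (j : Fin (q - 1)) :
    Submodule.map (PiTensorProduct.map g) (GS.shiftSub K P q M j)
      ≤ GS.shiftSub K E q L j := by
  rw [GS.shiftSub, GS.shiftSub]
  have hc : ((j : ℕ) + (2 + (q - 2 - (j : ℕ)))) = q := by have := j.2; omega
  rw [← Submodule.map_comp, map_cast _ _ g hc, Submodule.map_comp]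
  exact Submodule.map_mono (map_segAux_le _ _ _ (fun s t => hML _ _))

theorem map_Eint_le (q : ℕ) (g : Fin q → (P →ₗ[K] E))
    {M : Submodule K (P ⊗[K] P)} {L : Submodule K (E ⊗[K] E)}
    (hML : ∀ s t, Submodule.map (TensorProduct.map (g s) (g t)) M ≤ L) :
    Submodule.map (PiTensorProduct.map g) (GS.Eint K P q M) ≤ GS.Eint K E q L := by
  rw [GS.Eint, GS.Eint]
  refine le_iInf fun j => ?_
  exact le_trans (Submodule.map_mono (iInf_le _ j)) (map_shiftSub_le q g hML j)

end Aux2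

section Aux3

variable {K : Type*} [Field K]
variable {P E : Type*} [AddCommGroup P] [Module K P] [AddCommGroup E] [Module K E]

theorem tensor_zero_of_lTensor {X : Type*} [AddCommGroup X] [Module K X]
    {ι : Type*} [Fintype ι] [DecidableEq ι] {C : ι → Type*} [∀ i, AddCommGroup (C i)]
    [∀ i, Module K (C i)] (h : ∀ i, P →ₗ[K] C i)
    (hinj : Function.Injective (LinearMap.pi h)) (w : X ⊗[K] P)
    (hw : ∀ i, LinearMap.lTensor X (h i) w = 0) : w = 0 := by
  have hcomp : (TensorProduct.piRight K K X C).toLinearMap ∘ₗ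
      LinearMap.lTensor X (LinearMap.pi h)
      = LinearMap.pi (fun i => LinearMap.lTensor X (h i)) := by
    apply TensorProduct.ext'
    intro x p
    funext i
    simp
  have h0 : LinearMap.lTensor X (LinearMap.pi h) w = 0 := by
    apply (TensorProduct.piRight K K X C).injective
    rw [map_zero]
    have := LinearMap.congr_fun hcomp w
    simp only [LinearMap.coe_comp, Function.comp_apply, LinearEquiv.coe_coe] at this
    rw [this]
    funext i
    simp [hw i]
  exact Module.Flat.lTensor_preserves_injective_linearMap _ hinj
    (by rw [h0, map_zero] : LinearMap.lTensor X (LinearMap.pi h) w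
      = LinearMap.lTensor X (LinearMap.pi h) 0)

/-- The joint projections out of a tensor power of `P` are jointly injective. -/
theorem tpow_jointly_injective (m : ℕ) (τ : Fin m → (P →ₗ[K] E))
    (hτ : Function.Injective (LinearMap.pi τ)) :
    ∀ (q : ℕ) (x : ⨂[K]^q P),
      (∀ f : Fin q → Fin m, PiTensorProduct.map (fun s => τ (f s)) x = 0) → x = 0 := by
  intro q
  induction q with
  | zero =>
    intro x hx
    have hmap : (PiTensorProduct.map (fun s : Fin 0 => τ (Fin.elim0 s))
        : ⨂[K]^0 P →ₗ[K] ⨂[K]^0 E)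
        = (PiTensorProduct.isEmptyEquiv (Fin 0)).symm.toLinearMap ∘ₗ
          (PiTensorProduct.isEmptyEquiv (Fin 0)).toLinearMap := by
      ext x
      simp only [LinearMap.compMultilinearMap_apply, PiTensorProduct.map_tprod,
        LinearMap.coe_comp, Function.comp_apply, LinearEquiv.coe_coe,
        PiTensorProduct.isEmptyEquiv_apply_tprod, PiTensorProduct.isEmptyEquiv_symm_apply,
        one_smul]
      congr
      funext s
      exact s.elim0
    have hx0 := hx Fin.elim0
    rw [show (fun s : Fin 0 => τ (Fin.elim0 s)) = (fun s : Fin 0 => τ (Fin.elim0 s)) from rfl,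
      hmap] at hx0
    simp only [LinearMap.coe_comp, Function.comp_apply, LinearEquiv.coe_coe] at hx0
    exact (LinearEquiv.map_eq_zero_iff _).mp ((LinearEquiv.map_eq_zero_iff _).mp hx0)
  | succ q ih =>
    intro x hx
    set y : (⨂[K]^q P) ⊗[K] (⨂[K]^1 P) :=
      (TensorPower.mulEquiv (R := K) (M := P) (n := q) (m := 1)).symm x with hy
    have hxy : x = TensorPower.mulEquiv y := (LinearEquiv.apply_symm_apply _ _).symm
    set A : (Fin q → Fin m) → ((⨂[K]^q P) →ₗ[K] (⨂[K]^q E)) :=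
      fun f₁ => PiTensorProduct.map (fun s => τ (f₁ s)) with hA
    have h1 : ∀ (f₁ : Fin q → Fin m) (j : Fin m),
        TensorProduct.map (A f₁) (PiTensorProduct.map (fun _ : Fin 1 => τ j)) y = 0 := by
      intro f₁ j
      have hf := hx (Fin.snoc f₁ j : Fin (q + 1) → Fin m)
      rw [hxy] at hf
      have hnat := LinearMap.congr_fun
        (map_mulEquiv q 1 (fun s : Fin (q + 1) => τ ((Fin.snoc f₁ j : Fin (q + 1) → Fin m) s))) y
      simp only [LinearMap.coe_comp, Function.comp_apply, LinearEquiv.coe_coe] at hnat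
      rw [hnat] at hf
      have e1 : (fun i : Fin q => τ ((Fin.snoc f₁ j : Fin (q + 1) → Fin m) (Fin.castAdd 1 i))) = fun i => τ (f₁ i) := by
        funext i
        have hcs : Fin.castAdd 1 i = Fin.castSucc i := rfl
        rw [hcs, Fin.snoc_castSucc]
      have e2 : (fun i : Fin 1 => τ ((Fin.snoc f₁ j : Fin (q + 1) → Fin m) (Fin.natAdd q i))) = fun _ : Fin 1 => τ j := by
        funext i
        have h0 : Fin.natAdd q i = Fin.last q := by
          apply Fin.ext
          have h2 := i.2
          simp only [Fin.natAdd, Fin.val_last]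
          omega
        rw [h0, Fin.snoc_last]
      rw [e1, e2] at hf
      exact (LinearEquiv.map_eq_zero_iff _).mp hf
    set y₂ : (⨂[K]^q P) ⊗[K] P :=
      (TensorProduct.congr (LinearEquiv.refl K (⨂[K]^q P)) (GS.pow1 K P).symm) y with hy₂
    have h2 : ∀ (f₁ : Fin q → Fin m) (j : Fin m),
        TensorProduct.map (A f₁) (τ j) y₂ = 0 := by
      intro f₁ j
      have hcomp : TensorProduct.map (A f₁) (τ j) ∘ₗ
          (TensorProduct.congr (LinearEquiv.refl K (⨂[K]^q P)) (GS.pow1 K P).symm).toLinearMap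
          = (TensorProduct.congr (LinearEquiv.refl K (⨂[K]^q E))
              (GS.pow1 K E).symm).toLinearMap ∘ₗ
            TensorProduct.map (A f₁) (PiTensorProduct.map (fun _ : Fin 1 => τ j)) := by
        apply TensorProduct.ext'
        intro u v
        simp only [LinearMap.coe_comp, Function.comp_apply, LinearEquiv.coe_coe,
          TensorProduct.map_tmul, TensorProduct.congr_tmul, LinearEquiv.refl_apply]
        congr 1
        have hp := LinearMap.congr_fun (map_pow1 (τ j)) ((GS.pow1 K P).symm v)
        simp only [LinearMap.coe_comp, Function.comp_apply, LinearEquiv.coe_coe,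
          LinearEquiv.apply_symm_apply] at hp
        rw [hp, LinearEquiv.symm_apply_apply]
      have hc := LinearMap.congr_fun hcomp y
      simp only [LinearMap.coe_comp, Function.comp_apply, LinearEquiv.coe_coe] at hc
      rw [hy₂, hc, h1 f₁ j, map_zero]
    have h3 : ∀ f₁ : Fin q → Fin m, LinearMap.rTensor P (A f₁) y₂ = 0 := by
      intro f₁
      apply tensor_zero_of_lTensor τ hτ
      intro j
      rw [← LinearMap.comp_apply, LinearMap.lTensor_comp_rTensor]
      exact h2 f₁ j
    set y₃ : P ⊗[K] (⨂[K]^q P) := TensorProduct.comm K _ _ y₂ with hy₃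
    have h4 : ∀ f₁ : Fin q → Fin m, LinearMap.lTensor P (A f₁) y₃ = 0 := by
      intro f₁
      have hcm : LinearMap.lTensor P (A f₁) ∘ₗ
          (TensorProduct.comm K (⨂[K]^q P) P).toLinearMap
          = (TensorProduct.comm K (⨂[K]^q E) P).toLinearMap ∘ₗ
            LinearMap.rTensor P (A f₁) := by
        apply TensorProduct.ext'
        intro u v
        simp
      have := LinearMap.congr_fun hcm y₂
      simp only [LinearMap.coe_comp, Function.comp_apply, LinearEquiv.coe_coe] at this
      rw [hy₃, this, h3 f₁, map_zero]
    have hpiA : Function.Injective (LinearMap.pi A) := by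
      rw [← LinearMap.ker_eq_bot, LinearMap.ker_eq_bot']
      intro z hz
      exact ih z (fun f₁ => congrFun hz f₁)
    have h5 : y₃ = 0 := tensor_zero_of_lTensor A hpiA y₃ h4
    have h6 : y₂ = 0 := (LinearEquiv.map_eq_zero_iff _).mp (by rw [← hy₃, h5])
    have h7 : y = 0 := (LinearEquiv.map_eq_zero_iff _).mp (by rw [← hy₂, h6])
    rw [hxy, h7, map_zero]

end Aux3

section Aux4

variable {K : Type*} [Field K]
variable {P E : Type*} [AddCommGroup P] [Module K P] [AddCommGroup E] [Module K E]

theorem tpow_finiteDimensional [FiniteDimensional K E] (q : ℕ) :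
    FiniteDimensional K (⨂[K]^q E) := by
  induction q with
  | zero => exact (PiTensorProduct.isEmptyEquiv (Fin 0)).symm.finiteDimensional
  | succ q ih =>
    haveI := ih
    haveI : FiniteDimensional K (⨂[K]^1 E) := (GS.pow1 K E).finiteDimensional
    exact (TensorPower.mulEquiv (R := K) (M := E) (n := q) (m := 1)).finiteDimensional

theorem tpow_eq_zero_of_subsingleton [Subsingleton P] {q : ℕ} (hq : 0 < q)
    (x : ⨂[K]^q P) : x = 0 := by
  induction x using PiTensorProduct.induction_on' with
  | tprodCoeff r f =>
    rw [PiTensorProduct.tprodCoeff_eq_smul_tprod]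
    have h0 : f ⟨0, hq⟩ = 0 := Subsingleton.elim _ _
    rw [MultilinearMap.map_coord_zero (PiTensorProduct.tprod K) ⟨0, hq⟩ h0, smul_zero]
  | add x y hx hy => rw [hx, hy, add_zero]

end Aux4

end GSAux

/-- Main Lemma. Let `E` be an `n`-dimensional `K`-vector space with an
increasing flag `E₁ ⊂ ... ⊂ Eₙ = E` (`dim E_j = j`), `n₁,...,n_m ∈ {1,...,n}`,
`G = E_{n₁} ⊕ ... ⊕ E_{n_m}` and `L ⊆ E ⊗ E` a subspace. Let
`L_G = ⊕_{j,k} (E_{n_j} ⊗ E_{n_k}) ∩ L ⊆ G ⊗ G`. Then for every `q ≥ 2`,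
`dim E_q(L_G, G) ≤ m^q · dim E_q(L, E)`. -/
theorem main_lemma (K : Type*) [Field K] (E : Type*) [AddCommGroup E] [Module K E]
    (n m q : ℕ) (hq2 : 2 ≤ q) (hE : Module.finrank K E = n)
    (F : ℕ → Submodule K E)
    (hmono : ∀ j k, 1 ≤ j → j ≤ k → k ≤ n → F j ≤ F k)
    (hdim : ∀ j, 1 ≤ j → j ≤ n → Module.finrank K (F j) = j)
    (htop : F n = ⊤)
    (nj : Fin m → ℕ) (hnj : ∀ i, 1 ≤ nj i ∧ nj i ≤ n)
    (L : Submodule K (E ⊗[K] E)) :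
    -- `G` is the (external) direct sum of the subspaces `E_{n₁}, ..., E_{n_m}`
    let G := ∀ i : Fin m, F (nj i)
    -- the canonical map `G → E` summing the inclusions of the summands
    let σ : G →ₗ[K] E := ∑ i : Fin m, (F (nj i)).subtype ∘ₗ LinearMap.proj i
    -- `L_G = ⊕_{j,k} L_{n_j,n_k}`, where the copy of `L_{n_j,n_k} = (E_{n_j} ⊗ E_{n_k}) ∩ L`
    -- inside `G ⊗ G` is carved out of the `(j,k)`-summand `E_{n_j} ⊗ E_{n_k}` of `G ⊗ G`
    -- as the set of elements mapped into `L` by `σ ⊗ σ`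
    let LG : Submodule K (G ⊗[K] G) := ⨆ j : Fin m, ⨆ k : Fin m,
      LinearMap.range (TensorProduct.map
          ((LinearMap.single K (fun i => F (nj i)) j : _ →ₗ[K] G))
          ((LinearMap.single K (fun i => F (nj i)) k : _ →ₗ[K] G))) ⊓
        Submodule.comap (TensorProduct.map σ σ) L
    Module.finrank K (GS.Eint K G q LG) ≤ m ^ q * Module.finrank K (GS.Eint K E q L) := by
  intro G σ LG
  by_cases hm0 : m = 0
  · subst hm0
    haveI : Subsingleton G := ⟨fun a b => funext fun i => i.elim0⟩
    haveI : Subsingleton (GS.Eint K G q LG) :=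
      ⟨fun a b => Subtype.ext (by
        rw [GSAux.tpow_eq_zero_of_subsingleton (by omega) (a : ⨂[K]^q G),
          GSAux.tpow_eq_zero_of_subsingleton (by omega) (b : ⨂[K]^q G)])⟩
    rw [Module.finrank_zero_of_subsingleton]
    exact Nat.zero_le _
  · have hm : 0 < m := Nat.pos_of_ne_zero hm0
    have hn : 0 < n := lt_of_lt_of_le Nat.one_pos (le_trans (hnj ⟨0, hm⟩).1 (hnj ⟨0, hm⟩).2)
    haveI hfdE : FiniteDimensional K E := FiniteDimensional.of_finrank_pos (by omega)
    haveI := GSAux.tpow_finiteDimensional (E := E) (K := K) q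
    set τ : Fin m → (G →ₗ[K] E) := fun i => (F (nj i)).subtype ∘ₗ LinearMap.proj i with hτdef
    have hσ : σ = ∑ i : Fin m, (F (nj i)).subtype ∘ₗ LinearMap.proj i := rfl
    have hLGdef : LG = ⨆ j : Fin m, ⨆ k : Fin m,
        LinearMap.range (TensorProduct.map
            ((LinearMap.single K (fun i => F (nj i)) j : _ →ₗ[K] G))
            ((LinearMap.single K (fun i => F (nj i)) k : _ →ₗ[K] G))) ⊓
          Submodule.comap (TensorProduct.map σ σ) L := rfl
    have hτ : Function.Injective (LinearMap.pi τ) := by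
      rw [← LinearMap.ker_eq_bot, LinearMap.ker_eq_bot']
      intro z hz
      funext i
      have h1 := congrFun hz i
      simp only [LinearMap.pi_apply, hτdef, LinearMap.coe_comp, Function.comp_apply,
        LinearMap.proj_apply, Submodule.coe_subtype, Pi.zero_apply] at h1
      exact Subtype.ext h1
    -- evaluation of σ and τ on single
    have hσs : ∀ (i : Fin m) (u : F (nj i)),
        σ ((LinearMap.single K (fun i => F (nj i)) i) u) = (u : E) := by
      intro i u
      rw [hσ, LinearMap.sum_apply]
      rw [Finset.sum_eq_single i]
      · rw [LinearMap.comp_apply, ← LinearMap.comp_apply (LinearMap.proj i),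
          LinearMap.proj_comp_single_same, LinearMap.id_apply]
        rfl
      · intro i' _ hne
        rw [LinearMap.comp_apply, ← LinearMap.comp_apply (LinearMap.proj i'),
          LinearMap.proj_comp_single_ne K _ i' i hne, LinearMap.zero_apply, map_zero]
      · simp
    have hτs : ∀ (i : Fin m) (u : F (nj i)),
        τ i ((LinearMap.single K (fun i => F (nj i)) i) u) = (u : E) := by
      intro i u
      simp only [hτdef, LinearMap.comp_apply]
      rw [← LinearMap.comp_apply (LinearMap.proj i), LinearMap.proj_comp_single_same,
        LinearMap.id_apply]
      rfl
    have hτne : ∀ (a i : Fin m) (u : F (nj i)), a ≠ i →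
        τ a ((LinearMap.single K (fun i => F (nj i)) i) u) = 0 := by
      intro a i u hne
      simp only [hτdef, LinearMap.comp_apply]
      rw [← LinearMap.comp_apply (LinearMap.proj a), LinearMap.proj_comp_single_ne K _ a i hne,
        LinearMap.zero_apply, map_zero]
    have hLG : ∀ a b : Fin m, Submodule.map (TensorProduct.map (τ a) (τ b)) LG ≤ L := by
      intro a b
      rw [hLGdef, Submodule.map_iSup]
      refine iSup_le fun j => ?_
      rw [Submodule.map_iSup]
      refine iSup_le fun k => ?_
      rintro x ⟨y, ⟨⟨u, rfl⟩, hy2⟩, rfl⟩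
      by_cases haj : a = j
      · by_cases hbk : b = k
        · subst haj; subst hbk
          have heq : TensorProduct.map (τ a) (τ b)
              (TensorProduct.map (LinearMap.single K (fun i => F (nj i)) a)
                (LinearMap.single K (fun i => F (nj i)) b) u)
              = TensorProduct.map σ σ
              (TensorProduct.map (LinearMap.single K (fun i => F (nj i)) a)
                (LinearMap.single K (fun i => F (nj i)) b) u) := by
            rw [← LinearMap.comp_apply, ← LinearMap.comp_apply, ← TensorProduct.map_comp,
              ← TensorProduct.map_comp]
            have hcg : ∀ c : Fin m, τ c ∘ₗ LinearMap.single K (fun i => F (nj i)) c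
                = σ ∘ₗ LinearMap.single K (fun i => F (nj i)) c := by
              intro c
              ext w
              simp only [LinearMap.coe_comp, Function.comp_apply]
              rw [hτs, hσs]
            rw [hcg, hcg]
          rw [heq]
          exact hy2
        · have hz : τ b ∘ₗ LinearMap.single K (fun i => F (nj i)) k = 0 := by
            ext w
            simp only [LinearMap.coe_comp, Function.comp_apply, LinearMap.zero_apply]
            exact hτne b k w hbk
          rw [← LinearMap.comp_apply, ← TensorProduct.map_comp, hz,
            TensorProduct.map_zero_right, LinearMap.zero_apply]
          exact L.zero_mem
      · have hz : τ a ∘ₗ LinearMap.single K (fun i => F (nj i)) j = 0 := by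
          ext w
          simp only [LinearMap.coe_comp, Function.comp_apply, LinearMap.zero_apply]
          exact hτne a j w haj
        rw [← LinearMap.comp_apply, ← TensorProduct.map_comp, hz,
          TensorProduct.map_zero_left, LinearMap.zero_apply]
        exact L.zero_mem
    have hEmap : ∀ f : Fin q → Fin m, ∀ x ∈ GS.Eint K G q LG,
        (PiTensorProduct.map (fun s => τ (f s))) x ∈ GS.Eint K E q L := by
      intro f x hx
      exact GSAux.map_Eint_le q (fun s => τ (f s)) (fun s t => hLG (f s) (f t))
        (Submodule.mem_map_of_mem hx)
    set Φ : GS.Eint K G q LG →ₗ[K] ((Fin q → Fin m) → GS.Eint K E q L) :=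
      LinearMap.pi (fun f => (PiTensorProduct.map (fun s => τ (f s))).restrict (hEmap f))
      with hΦ
    have hΦinj : Function.Injective Φ := by
      suffices h : ∀ z, Φ z = 0 → z = 0 by
        intro z₁ z₂ hz
        have h12 := h (z₁ - z₂) (by
          have hms : Φ (z₁ - z₂) = Φ z₁ - Φ z₂ := LinearMap.map_sub Φ z₁ z₂
          rw [hms, hz, sub_self])
        exact sub_eq_zero.mp h12
      intro z hz
      apply Subtype.ext
      apply GSAux.tpow_jointly_injective m τ hτ q (z : ⨂[K]^q G)
      intro f
      have h1 := congrFun hz f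
      rw [hΦ] at h1
      have h2 := congrArg Subtype.val h1
      simpa [LinearMap.restrict_apply] using h2
    calc Module.finrank K (GS.Eint K G q LG)
        ≤ Module.finrank K ((Fin q → Fin m) → GS.Eint K E q L) :=
          LinearMap.finrank_le_finrank_of_injective hΦinj
      _ = m ^ q * Module.finrank K (GS.Eint K E q L) := by
          rw [Module.finrank_pi_fintype, Finset.sum_const, Finset.card_univ, smul_eq_mul,
            Fintype.card_fun, Fintype.card_fin, Fintype.card_fin]
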